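/- If a sequence of asymptotic e-variables (E⁽ⁿ⁾) is uniformly integrable under each P ∈ P, then it is strongly asymptotic: limsup_{n→∞} E^P[E⁽ⁿ⁾] ≤ 1 for all P ∈ P. -/

import Mathlib

open MeasureTheory
open scoped ENNReal
open Filter

/-- If a sequence of asymptotic e-variables is uniformly integrable under each `P ∈ Unv`, then it
is strongly asymptotic: `limsup_n E^P[Eⁿ] ≤ 1` for all `P ∈ Unv`. -/
theorem strongly_asymptotic_of_uniformly_integrable {Ω : Type*} [MeasurableSpace Ω]
    (Unv : Set (Measure Ω)) (hprob : ∀ P ∈ Unv, IsProbabilityMeasure P)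
    (E : ℕ → Ω → ℝ≥0∞) (hEmeas : ∀ n, Measurable (E n))
    (ε δ : ℕ → Measure Ω → ℝ)
    (hε : ∀ n, ∀ P ∈ Unv, 0 ≤ ε n P) (hδ : ∀ n, ∀ P ∈ Unv, 0 ≤ δ n P ∧ δ n P ≤ 1)
    (htend : ∀ P ∈ Unv, Tendsto (fun n => ε n P) atTop (nhds 0) ∧
      Tendsto (fun n => δ n P) atTop (nhds 0))
    (happrox : ∀ P ∈ Unv, ∀ n, ∀ t : ℝ, 0 ≤ t →
      ∫⁻ ω, min (E n ω) (ENNReal.ofReal t) ∂P ≤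
        1 + ENNReal.ofReal (ε n P) + ENNReal.ofReal (δ n P) * ENNReal.ofReal t)
    (hui : ∀ P ∈ Unv, Tendsto
      (fun T : ℝ => ⨆ n, ∫⁻ ω in {ω | ENNReal.ofReal T ≤ E n ω}, E n ω ∂P)
      atTop (nhds 0)) :
    ∀ P ∈ Unv, Filter.limsup (fun n => ∫⁻ ω, E n ω ∂P) atTop ≤ 1 := by
  intro P hP
  refine ENNReal.le_of_forall_pos_le_add fun ε0 hε0 _ => ?_
  set e3 : ℝ≥0∞ := (ε0 : ℝ≥0∞) / 3 with he3def
  have he3pos : 0 < e3 := ENNReal.div_pos (by exact_mod_cast hε0.ne') (by norm_num)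
  have hsum : e3 + e3 + e3 = (ε0 : ℝ≥0∞) := by
    rw [he3def, ENNReal.div_add_div_same, ENNReal.div_add_div_same]
    rw [show (ε0 : ℝ≥0∞) + ε0 + ε0 = 3 * ε0 by ring, mul_div_assoc]
    rw [ENNReal.mul_div_cancel' (by norm_num) (by norm_num)]
  -- choose T
  have hT' := ((hui P hP).eventually (Iio_mem_nhds he3pos)).and (eventually_ge_atTop (0:ℝ))
  obtain ⟨T, hTlt, hT0⟩ := hT'.exists
  have htail : ∀ n, ∫⁻ ω in {ω | ENNReal.ofReal T ≤ E n ω}, E n ω ∂P ≤ e3 :=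
    fun n => (le_iSup (fun n => ∫⁻ ω in {ω | ENNReal.ofReal T ≤ E n ω}, E n ω ∂P) n).trans hTlt.le
  -- tendsto of the bound
  have h1 : Tendsto (fun n => 1 + ENNReal.ofReal (ε n P) + ENNReal.ofReal (δ n P)
      * ENNReal.ofReal T) atTop (nhds 1) := by
    have hε' : Tendsto (fun n => ENNReal.ofReal (ε n P)) atTop (nhds 0) := by
      simpa using (ENNReal.tendsto_ofReal (htend P hP).1)
    have hδ' : Tendsto (fun n => ENNReal.ofReal (δ n P) * ENNReal.ofReal T) atTop (nhds 0) := by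
      have := ENNReal.Tendsto.mul_const (b := ENNReal.ofReal T) (ENNReal.tendsto_ofReal (htend P hP).2)
        (Or.inr ENNReal.ofReal_ne_top)
      simpa using this
    have := (hε'.const_add 1).add hδ'
    simpa using this
  have hlt : (1 : ℝ≥0∞) < 1 + e3 + e3 := by
    rw [add_assoc]
    exact ENNReal.lt_add_right ENNReal.one_ne_top (by simp [he3pos.ne'] : e3 + e3 ≠ 0)
  have hev := h1.eventually (Iio_mem_nhds hlt)
  refine Filter.limsup_le_of_le (by isBoundedDefault) ?_
  filter_upwards [hev] with n hn
  have hpoint : ∀ ω, E n ω ≤ min (E n ω) (ENNReal.ofReal T)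
      + Set.indicator {ω | ENNReal.ofReal T ≤ E n ω} (E n) ω := by
    intro ω
    by_cases h : ENNReal.ofReal T ≤ E n ω
    · rw [Set.indicator_of_mem (show ω ∈ {ω | ENNReal.ofReal T ≤ E n ω} from h)]
      exact le_add_left le_rfl
    · rw [Set.indicator_of_notMem (show ω ∉ {ω | ENNReal.ofReal T ≤ E n ω} from h),
        add_zero, min_eq_left (le_of_not_ge h)]
  have hmeasset : MeasurableSet {ω | ENNReal.ofReal T ≤ E n ω} :=
    measurableSet_le measurable_const (hEmeas n)
  calc ∫⁻ ω, E n ω ∂P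
      ≤ ∫⁻ ω, (min (E n ω) (ENNReal.ofReal T)
          + Set.indicator {ω | ENNReal.ofReal T ≤ E n ω} (E n) ω) ∂P :=
        lintegral_mono hpoint
    _ = (∫⁻ ω, min (E n ω) (ENNReal.ofReal T) ∂P)
          + ∫⁻ ω in {ω | ENNReal.ofReal T ≤ E n ω}, E n ω ∂P := by
        rw [lintegral_add_left ((hEmeas n).min measurable_const),
          lintegral_indicator hmeasset (E n)]
    _ ≤ (1 + ENNReal.ofReal (ε n P) + ENNReal.ofReal (δ n P) * ENNReal.ofReal T) + e3 :=
        add_le_add (happrox P hP n T hT0) (htail n)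
    _ ≤ (1 + e3 + e3) + e3 := add_le_add hn.le le_rfl
    _ = 1 + ε0 := by rw [add_assoc, add_assoc, ← add_assoc e3, hsum]
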